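/- The function u₁(x,y,t) = λ₁ t^{-1/2} Ψ₂(1/2; (1+2α)/2, (1+2β)/2; −x²/(8t), −y²/(8t)) satisfies the degenerate parabolic equation u_t − u_{xx} − u_{yy} − (2α/x) u_x − (2β/y) u_y = 0 for all x > 0, y > 0, t > 0. -/

import Mathlib

/-- Pochhammer symbol (a)_m = a(a+1)⋯(a+m−1). -/
noncomputable def poch (a : ℝ) (m : ℕ) : ℝ := ∏ i ∈ Finset.range m, (a + i)

/-- The Humbert confluent hypergeometric function Ψ₂(a;c₁,c₂;x,y). -/
noncomputable def Psi2 (a c₁ c₂ x y : ℝ) : ℝ :=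
  ∑' p : ℕ × ℕ,
    poch a (p.1 + p.2) /
        (poch c₁ p.1 * poch c₂ p.2 * (Nat.factorial p.1 : ℝ) * (Nat.factorial p.2 : ℝ))
      * x ^ p.1 * y ^ p.2

/-- u₁(x,y,t) = λ₁ t^{-1/2} Ψ₂(1/2; (1+2α)/2, (1+2β)/2; −x²/(8t), −y²/(8t)). -/
noncomputable def uPsi1 (α β lam x y t : ℝ) : ℝ :=
  lam * t ^ (-(1 / 2) : ℝ) *
    Psi2 (1 / 2) ((1 + 2 * α) / 2) ((1 + 2 * β) / 2)
      (-(x ^ 2) / (8 * t)) (-(y ^ 2) / (8 * t))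



open Filter Set

lemma poch_succ (c : ℝ) (m : ℕ) : poch c (m + 1) = poch c m * (c + m) :=
  Finset.prod_range_succ _ _

lemma poch_ne_zero {c : ℝ} (hc : ∀ n : ℕ, c ≠ -(n : ℝ)) (m : ℕ) : poch c m ≠ 0 :=
  Finset.prod_ne_zero_iff.2 fun i _ h => hc i (by linarith)

lemma poch_half_nonneg (k : ℕ) : 0 ≤ poch (1/2) k :=
  Finset.prod_nonneg fun i _ => by positivity

lemma poch_half_le (k : ℕ) : poch (1/2) k ≤ (Nat.factorial k : ℝ) := by
  calc poch (1/2) k ≤ ∏ i ∈ Finset.range k, ((i : ℝ) + 1) :=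
        Finset.prod_le_prod (fun i _ => by positivity) (fun i _ => by have : (0:ℝ) ≤ i := Nat.cast_nonneg i; linarith)
    _ = (Nat.factorial k : ℝ) := by
        rw [← Finset.prod_range_add_one_eq_factorial]; push_cast; rfl

lemma factorial_add_le (m n : ℕ) : (Nat.factorial (m+n) : ℝ) ≤ 2^(m+n) * Nat.factorial m * Nat.factorial n := by
  have h1 : (m+n).choose m * Nat.factorial m * Nat.factorial n = Nat.factorial (m+n) := by
    have := Nat.choose_mul_factorial_mul_factorial (Nat.le_add_right m n)
    simpa [Nat.add_sub_cancel_left] using this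
  have h2 : (m+n).choose m ≤ 2^(m+n) := by
    calc (m+n).choose m ≤ ∑ i ∈ Finset.range (m+n+1), (m+n).choose i :=
          Finset.single_le_sum (fun i _ => Nat.zero_le _)
            (Finset.mem_range.2 (Nat.lt_succ_of_le (Nat.le_add_right m n)))
      _ = 2^(m+n) := Nat.sum_range_choose (m+n)
  have : (Nat.factorial (m+n) : ℕ) ≤ 2^(m+n) * Nat.factorial m * Nat.factorial n := by
    rw [← h1]; exact Nat.mul_le_mul_right _ (Nat.mul_le_mul_right _ h2)
  exact_mod_cast this

lemma summable_pow_div_poch {c : ℝ} (hc : ∀ n : ℕ, c ≠ -(n : ℝ)) {D : ℝ} (hD : 0 ≤ D) :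
    Summable fun m : ℕ => D ^ m / |poch c m| := by
  apply summable_of_ratio_norm_eventually_le (r := 1/2) (by norm_num)
  have hev : ∀ᶠ m : ℕ in atTop, 2 * D + |c| ≤ (m : ℝ) := by
    have := tendsto_natCast_atTop_atTop (R := ℝ)
    exact this.eventually_ge_atTop _
  filter_upwards [hev] with m hm
  have hpm : 0 < |poch c m| := abs_pos.2 (poch_ne_zero hc m)
  have hcm0 : c + (m : ℝ) ≠ 0 := fun h => hc m (by linarith)
  have hcm : 0 < |c + (m : ℝ)| := abs_pos.2 hcm0
  have hcmb : 2 * D ≤ |c + (m : ℝ)| := by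
    have : (m : ℝ) ≤ |c + m| + |c| := by
      calc (m : ℝ) = |(m : ℝ)| := (abs_of_nonneg (by positivity)).symm
        _ = |(c + m) + (-c)| := by ring_nf
        _ ≤ |c + m| + |(-c)| := abs_add_le _ _
        _ = |c + m| + |c| := by rw [abs_neg]
    linarith
  have key : D / |c + (m:ℝ)| ≤ 1/2 := by
    rw [div_le_iff₀ hcm]; linarith
  have heq : D^(m+1) / |poch c (m+1)| = (D^m / |poch c m|) * (D / |c + m|) := by
    rw [poch_succ, abs_mul, pow_succ, div_mul_div_comm]
  have hn1 : abs (D ^ (m+1) / abs (poch c (m+1))) = D^(m+1)/abs (poch c (m+1)) := abs_of_nonneg (by positivity)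
  have hn2 : abs (D ^ m / abs (poch c m)) = D^m/abs (poch c m) := abs_of_nonneg (by positivity)
  rw [Real.norm_eq_abs, Real.norm_eq_abs, hn1, hn2, heq, mul_comm (1/2 : ℝ)]
  exact mul_le_mul_of_nonneg_left key (by positivity)

noncomputable def Kc (c₁ c₂ : ℝ) (p : ℕ × ℕ) : ℝ :=
  poch (1/2) (p.1 + p.2) /
    (poch c₁ p.1 * poch c₂ p.2 * (Nat.factorial p.1 : ℝ) * (Nat.factorial p.2 : ℝ))

noncomputable def Kb (c₁ c₂ : ℝ) (p : ℕ × ℕ) : ℝ :=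
  poch (1/2) (p.1 + p.2) /
    (|poch c₁ p.1| * |poch c₂ p.2| * (Nat.factorial p.1 : ℝ) * (Nat.factorial p.2 : ℝ))

lemma abs_Kc (c₁ c₂ : ℝ) (p : ℕ × ℕ) : |Kc c₁ c₂ p| = Kb c₁ c₂ p := by
  unfold Kc Kb
  rw [abs_div, abs_mul, abs_mul, abs_mul, abs_of_nonneg (poch_half_nonneg _),
    Nat.abs_cast, Nat.abs_cast]

lemma Kb_nonneg (c₁ c₂ : ℝ) (p : ℕ × ℕ) : 0 ≤ Kb c₁ c₂ p := by
  rw [← abs_Kc]; exact abs_nonneg _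

/-- master summability -/
lemma summable_master {c₁ c₂ : ℝ} (hc₁ : ∀ n : ℕ, c₁ ≠ -(n : ℝ)) (hc₂ : ∀ n : ℕ, c₂ ≠ -(n : ℝ))
    {A : ℝ} (hA : 0 ≤ A) :
    Summable fun p : ℕ × ℕ => Kb c₁ c₂ p * (A ^ p.1 * A ^ p.2) * ((p.1 : ℝ) + p.2 + 2) ^ 2 := by
  have h8A : (0:ℝ) ≤ 8 * A := by linarith
  have hs := ((summable_pow_div_poch hc₁ h8A).mul_of_nonneg (summable_pow_div_poch hc₂ h8A)
    (fun m => by positivity) (fun n => by positivity)).mul_left 16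
  apply Summable.of_nonneg_of_le (fun p => mul_nonneg (mul_nonneg (Kb_nonneg _ _ _) (by positivity)) (by positivity)) _ hs
  rintro ⟨m, n⟩
  show Kb c₁ c₂ (m, n) * (A ^ m * A ^ n) * ((m : ℝ) + n + 2) ^ 2
      ≤ 16 * ((8*A) ^ m / |poch c₁ m| * ((8*A) ^ n / |poch c₂ n|))
  have hp1 : 0 < |poch c₁ m| := abs_pos.2 (poch_ne_zero hc₁ m)
  have hp2 : 0 < |poch c₂ n| := abs_pos.2 (poch_ne_zero hc₂ n)
  have hfm : (0:ℝ) < Nat.factorial m := by exact_mod_cast Nat.factorial_pos m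
  have hfn : (0:ℝ) < Nat.factorial n := by exact_mod_cast Nat.factorial_pos n
  have h1 : poch (1/2) (m+n) ≤ 2^(m+n) * Nat.factorial m * Nat.factorial n :=
    (poch_half_le (m+n)).trans (factorial_add_le m n)
  have h2 : ((m:ℝ) + n + 2)^2 ≤ 16 * 4^(m+n) := by
    have hb : ((m:ℝ) + n + 2) ≤ 2^(m+n+2) := by
      have h := (Nat.cast_le (α := ℝ)).2 (Nat.lt_two_pow_self (n := m+n+2)).le
      push_cast at h; linarith
    calc ((m:ℝ)+n+2)^2 ≤ ((2:ℝ)^(m+n+2))^2 := by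
          apply pow_le_pow_left₀ (by positivity) hb
      _ = 16 * 4^(m+n) := by
          rw [← pow_mul, show (m+n+2)*2 = 2*(m+n)+4 by ring, pow_add, pow_mul]
          norm_num [mul_comm]
  have hAm : (0:ℝ) ≤ A ^ m * A ^ n := by positivity
  have hD : (0:ℝ) < |poch c₁ m| * |poch c₂ n| * Nat.factorial m * Nat.factorial n := by positivity
  have hRHS : 16 * ((8*A) ^ m / |poch c₁ m| * ((8*A) ^ n / |poch c₂ n|))
      = (16 * ((8*A)^m * (8*A)^n) * (Nat.factorial m * Nat.factorial n))
        / (|poch c₁ m| * |poch c₂ n| * Nat.factorial m * Nat.factorial n) := by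
    field_simp
  have hLHS : Kb c₁ c₂ (m, n) * (A ^ m * A ^ n) * ((m : ℝ) + n + 2) ^ 2
      = (poch (1/2) (m+n) * (A^m*A^n) * ((m:ℝ)+n+2)^2)
        / (|poch c₁ m| * |poch c₂ n| * Nat.factorial m * Nat.factorial n) := by
    unfold Kb
    rw [div_mul_eq_mul_div, div_mul_eq_mul_div]
  rw [hLHS, hRHS]
  apply div_le_div_of_nonneg_right ?_ hD.le
  case _ =>
    have e8 : ((8:ℝ)*A)^m * (8*A)^n = 2^(m+n) * 4^(m+n) * (A^m * A^n) := by
      rw [show ((2:ℝ)^(m+n) * 4^(m+n)) = 8^(m+n) from by rw [← mul_pow]; norm_num,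
        pow_add, mul_pow, mul_pow]
      ring
    calc poch (1/2) (m+n) * (A^m*A^n) * ((m:ℝ)+n+2)^2
        ≤ ((2:ℝ)^(m+n) * Nat.factorial m * Nat.factorial n) * (A^m*A^n) * (16*4^(m+n)) :=
          mul_le_mul (mul_le_mul_of_nonneg_right h1 hAm) h2 (by positivity) (by positivity)
      _ = 16 * ((8*A)^m * (8*A)^n) * ((Nat.factorial m : ℝ) * Nat.factorial n) := by
          rw [e8]; ring

lemma prod_bound {M M' k c1 c2 a1 a2 j Q : ℝ} (hk : 0 ≤ k) (h10 : 0 ≤ c1) (h20 : 0 ≤ c2)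
    (hj0 : 0 ≤ j) (hM : 0 ≤ M) (hMM : M ≤ M') (h1 : c1 ≤ a1) (h2 : c2 ≤ a2)
    (hj : j ≤ 4 * Q) :
    M * k * c1 * c2 * j ≤ 4 * M' * (k * (a1 * a2) * Q) := by
  have hM' : 0 ≤ M' := hM.trans hMM
  have hQ : 0 ≤ Q := by linarith
  have s1 : M * k ≤ M' * k := mul_le_mul_of_nonneg_right hMM hk
  have ha1 : 0 ≤ a1 := h10.trans h1
  have ha2 : 0 ≤ a2 := h20.trans h2
  have s2 : M * k * c1 ≤ M' * k * a1 := mul_le_mul s1 h1 h10 (mul_nonneg hM' hk)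
  have s3 : M * k * c1 * c2 ≤ M' * k * a1 * a2 :=
    mul_le_mul s2 h2 h20 (mul_nonneg (mul_nonneg hM' hk) ha1)
  have s4 : M * k * c1 * c2 * j ≤ M' * k * a1 * a2 * (4 * Q) :=
    mul_le_mul s3 hj hj0 (mul_nonneg (mul_nonneg (mul_nonneg hM' hk) ha1) ha2)
  calc M * k * c1 * c2 * j ≤ M' * k * a1 * a2 * (4 * Q) := s4
    _ = 4 * M' * (k * (a1 * a2) * Q) := by ring

/-- Weierstrass-type termwise differentiation of a tsum on an open set. -/
lemma hasDerivAt_tsum_on {ι : Type*} (F F' : ι → ℝ → ℝ) (u : ι → ℝ) (s : Set ℝ)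
    (hs : IsOpen s) (hu : Summable u)
    (hF : ∀ i z, z ∈ s → HasDerivAt (F i) (F' i z) z)
    (hFb : ∀ i z, z ∈ s → |F i z| ≤ u i)
    (hF'b : ∀ i z, z ∈ s → |F' i z| ≤ u i)
    {z₀ : ℝ} (hz₀ : z₀ ∈ s) :
    HasDerivAt (fun z => ∑' i, F i z) (∑' i, F' i z₀) z₀ := by
  have hsum : ∀ z ∈ s, Summable fun i => F i z := fun z hz =>
    Summable.of_abs (hu.of_nonneg_of_le (fun i => abs_nonneg _) (fun i => hFb i z hz))
  apply hasDerivAt_of_tendstoUniformlyOn (f := fun (A : Finset ι) z => ∑ i ∈ A, F i z)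
    (f' := fun (A : Finset ι) z => ∑ i ∈ A, F' i z) hs
    (tendstoUniformlyOn_tsum hu (fun i z hz => by
      simpa [Real.norm_eq_abs] using hF'b i z hz)) ?_ ?_ hz₀
  · exact Filter.Eventually.of_forall fun A z hz => HasDerivAt.fun_sum fun i _ => hF i z hz
  · exact fun z hz => (hsum z hz).hasSum

lemma Psi2_swap (a c₁ c₂ x y : ℝ) : Psi2 a c₁ c₂ x y = Psi2 a c₂ c₁ y x := by
  unfold Psi2
  rw [← (Equiv.prodComm ℕ ℕ).tsum_eq]
  apply tsum_congr
  rintro ⟨m, n⟩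
  simp only [Equiv.prodComm_apply, Prod.swap_prod_mk]
  rw [add_comm n m]
  ring

lemma uPsi1_swap (α β lam x y t : ℝ) : uPsi1 α β lam x y t = uPsi1 β α lam y x t := by
  unfold uPsi1; rw [Psi2_swap]

/-- coefficient of the series in the x-direction -/
noncomputable def cX (c₁ c₂ lam y t : ℝ) (p : ℕ × ℕ) : ℝ :=
  lam * t ^ (-(1 / 2) : ℝ) * Kc c₁ c₂ p * ((-(8 * t))⁻¹) ^ p.1 * (-(y ^ 2) / (8 * t)) ^ p.2

noncomputable def GX0 (c₁ c₂ lam y t : ℝ) (p : ℕ × ℕ) (s : ℝ) : ℝ :=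
  cX c₁ c₂ lam y t p * s ^ (2 * p.1)

noncomputable def GX1 (c₁ c₂ lam y t : ℝ) (p : ℕ × ℕ) (s : ℝ) : ℝ :=
  cX c₁ c₂ lam y t p * ((2 * p.1 : ℕ) : ℝ) * s ^ (2 * p.1 - 1)

noncomputable def GX2 (c₁ c₂ lam y t : ℝ) (p : ℕ × ℕ) (s : ℝ) : ℝ :=
  cX c₁ c₂ lam y t p * ((2 * p.1 : ℕ) : ℝ) * ((2 * p.1 - 1 : ℕ) : ℝ) * s ^ (2 * p.1 - 1 - 1)

noncomputable def FT0 (α β lam x y : ℝ) (p : ℕ × ℕ) (s : ℝ) : ℝ :=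
  lam * Kc ((1 + 2 * α) / 2) ((1 + 2 * β) / 2) p * (-(x ^ 2) / 8) ^ p.1 *
    (-(y ^ 2) / 8) ^ p.2 * s ^ (-(1 / 2) - (p.1 : ℝ) - (p.2 : ℝ))

noncomputable def FT1 (α β lam x y : ℝ) (p : ℕ × ℕ) (s : ℝ) : ℝ :=
  lam * Kc ((1 + 2 * α) / 2) ((1 + 2 * β) / 2) p * (-(x ^ 2) / 8) ^ p.1 *
    (-(y ^ 2) / 8) ^ p.2 *
    ((-(1 / 2) - (p.1 : ℝ) - (p.2 : ℝ)) * s ^ (-(1 / 2) - (p.1 : ℝ) - (p.2 : ℝ) - 1))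

lemma hasDerivAt_GX0 (c₁ c₂ lam y t : ℝ) (p : ℕ × ℕ) (z : ℝ) :
    HasDerivAt (fun s => GX0 c₁ c₂ lam y t p s) (GX1 c₁ c₂ lam y t p z) z := by
  unfold GX0 GX1
  simpa [mul_assoc] using (hasDerivAt_pow (2 * p.1) z).const_mul (cX c₁ c₂ lam y t p)

lemma hasDerivAt_GX1 (c₁ c₂ lam y t : ℝ) (p : ℕ × ℕ) (z : ℝ) :
    HasDerivAt (fun s => GX1 c₁ c₂ lam y t p s) (GX2 c₁ c₂ lam y t p z) z := by
  unfold GX1 GX2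
  simpa [mul_assoc] using (hasDerivAt_pow (2 * p.1 - 1) z).const_mul
    (cX c₁ c₂ lam y t p * ((2 * p.1 : ℕ) : ℝ))

lemma hasDerivAt_FT0 (α β lam x y : ℝ) (p : ℕ × ℕ) (z : ℝ) (hz : 0 < z) :
    HasDerivAt (fun s => FT0 α β lam x y p s) (FT1 α β lam x y p z) z := by
  unfold FT0 FT1
  exact (Real.hasDerivAt_rpow_const (Or.inl hz.ne')).const_mul _

/-- series representation in the x-direction -/
lemma uPsi1_eq_tsum_GX0 (α β lam y t : ℝ) (s : ℝ) :
    uPsi1 α β lam s y t = ∑' p, GX0 ((1 + 2 * α) / 2) ((1 + 2 * β) / 2) lam y t p s := by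
  unfold uPsi1 Psi2 GX0 cX Kc
  rw [← tsum_mul_left]
  apply tsum_congr
  rintro ⟨m, n⟩
  ring

/-- series representation in the t-direction, for positive time -/
lemma uPsi1_eq_tsum_FT0 (α β lam x y : ℝ) (s : ℝ) (hs : 0 < s) :
    uPsi1 α β lam x y s = ∑' p, FT0 α β lam x y p s := by
  unfold uPsi1 Psi2 FT0 Kc
  rw [← tsum_mul_left]
  apply tsum_congr
  rintro ⟨m, n⟩
  have hrp : s ^ (-(1 / 2) - (m : ℝ) - (n : ℝ))
      = s ^ (-(1 / 2) : ℝ) * (s⁻¹) ^ m * (s⁻¹) ^ n := by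
    have h1 : s ^ (-(m : ℝ)) = (s⁻¹) ^ m := by
      rw [Real.rpow_neg hs.le, Real.rpow_natCast, inv_pow]
    have h2 : s ^ (-(n : ℝ)) = (s⁻¹) ^ n := by
      rw [Real.rpow_neg hs.le, Real.rpow_natCast, inv_pow]
    rw [show -(1 / 2) - (m : ℝ) - (n : ℝ) = (-(1 / 2)) + (-(m : ℝ)) + (-(n : ℝ)) by ring,
      Real.rpow_add hs, Real.rpow_add hs, h1, h2]
  simp only [hrp]
  ring

noncomputable def AX (y t R : ℝ) : ℝ := max (R ^ 2 * (8 * t)⁻¹) |(-(y ^ 2) / (8 * t))|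

noncomputable def ubX (c₁ c₂ lam y t R : ℝ) (p : ℕ × ℕ) : ℝ :=
  4 * |lam * t ^ (-(1 / 2) : ℝ)| *
    (Kb c₁ c₂ p * (AX y t R ^ p.1 * AX y t R ^ p.2) * ((p.1 : ℝ) + p.2 + 2) ^ 2)

lemma AX_nonneg (y t R : ℝ) : 0 ≤ AX y t R := le_trans (abs_nonneg _) (le_max_right _ _)

lemma summable_ubX {c₁ c₂ : ℝ} (hc₁ : ∀ n : ℕ, c₁ ≠ -(n : ℝ)) (hc₂ : ∀ n : ℕ, c₂ ≠ -(n : ℝ))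
    (lam y t R : ℝ) : Summable (ubX c₁ c₂ lam y t R) :=
  (summable_master hc₁ hc₂ (AX_nonneg y t R)).mul_left _

lemma abs_cX (c₁ c₂ lam y t : ℝ) (ht : 0 < t) (p : ℕ × ℕ) :
    |cX c₁ c₂ lam y t p| = |lam * t ^ (-(1 / 2) : ℝ)| * Kb c₁ c₂ p *
      ((8 * t)⁻¹) ^ p.1 * |(-(y ^ 2) / (8 * t))| ^ p.2 := by
  unfold cX
  rw [abs_mul, abs_mul, abs_mul, abs_Kc, abs_pow, abs_pow, abs_inv, abs_neg,
    abs_of_pos (by linarith : (0:ℝ) < 8 * t)]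

lemma GX_bound_gen (c₁ c₂ lam y t R : ℝ) (ht : 0 < t) (hR : 1 ≤ R) (p : ℕ × ℕ) (z : ℝ)
    (hz : |z| ≤ R) (j : ℝ) (hj0 : 0 ≤ j) (hj : j ≤ 4 * ((p.1 : ℝ) + p.2 + 2) ^ 2)
    (k : ℕ) (hk : k ≤ 2 * p.1) :
    |cX c₁ c₂ lam y t p| * j * |z| ^ k ≤ ubX c₁ c₂ lam y t R p := by
  obtain ⟨m, n⟩ := p
  set M := |lam * t ^ (-(1 / 2) : ℝ)| with hM
  have hM0 : 0 ≤ M := abs_nonneg _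
  have hKb := Kb_nonneg c₁ c₂ (m, n)
  have h8t : (0:ℝ) < (8 * t)⁻¹ := by positivity
  have hzR : |z| ^ k ≤ R ^ (2 * m) := by
    calc |z| ^ k ≤ R ^ k := pow_le_pow_left₀ (abs_nonneg z) hz k
      _ ≤ R ^ (2 * m) := pow_le_pow_right₀ hR hk
  have step1 : |cX c₁ c₂ lam y t (m, n)| * j * |z| ^ k
      ≤ M * Kb c₁ c₂ (m, n) * ((8 * t)⁻¹) ^ m * |(-(y ^ 2) / (8 * t))| ^ n * j
        * R ^ (2 * m) := by
    rw [abs_cX c₁ c₂ lam y t ht]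
    apply mul_le_mul_of_nonneg_left hzR
    have : 0 ≤ M * Kb c₁ c₂ (m, n) * ((8 * t)⁻¹) ^ m * |(-(y ^ 2) / (8 * t))| ^ n :=
      mul_nonneg (mul_nonneg (mul_nonneg hM0 hKb) (by positivity)) (by positivity)
    exact mul_nonneg this hj0
  have step2 : M * Kb c₁ c₂ (m, n) * ((8 * t)⁻¹) ^ m * |(-(y ^ 2) / (8 * t))| ^ n * j
        * R ^ (2 * m)
      = M * Kb c₁ c₂ (m, n) * (R ^ 2 * (8 * t)⁻¹) ^ m * |(-(y ^ 2) / (8 * t))| ^ n * j := by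
    ring
  have step3 : M * Kb c₁ c₂ (m, n) * (R ^ 2 * (8 * t)⁻¹) ^ m * |(-(y ^ 2) / (8 * t))| ^ n * j
      ≤ 4 * M * (Kb c₁ c₂ (m, n) * (AX y t R ^ m * AX y t R ^ n) * ((m : ℝ) + n + 2) ^ 2) := by
    apply prod_bound hKb (by positivity) (by positivity) hj0 hM0 le_rfl
      (pow_le_pow_left₀ (by positivity) (le_max_left _ _) m)
      (pow_le_pow_left₀ (abs_nonneg _) (le_max_right _ _) n) hj
  calc |cX c₁ c₂ lam y t (m, n)| * j * |z| ^ k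
      ≤ _ := step1
    _ = _ := step2
    _ ≤ _ := step3

lemma sq_cast_ge (m n : ℕ) : (1:ℝ) ≤ ((m : ℝ) + n + 2) ^ 2 := by
  have h1 : (0:ℝ) ≤ (m:ℝ) := Nat.cast_nonneg m
  have h2 : (0:ℝ) ≤ (n:ℝ) := Nat.cast_nonneg n
  nlinarith

lemma abs_GX0_le (c₁ c₂ lam y t R : ℝ) (ht : 0 < t) (hR : 1 ≤ R) (p : ℕ × ℕ) (z : ℝ)
    (hz : |z| ≤ R) : |GX0 c₁ c₂ lam y t p z| ≤ ubX c₁ c₂ lam y t R p := by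
  have he : |GX0 c₁ c₂ lam y t p z| = |cX c₁ c₂ lam y t p| * 1 * |z| ^ (2 * p.1) := by
    unfold GX0; rw [abs_mul, abs_pow]; ring
  rw [he]
  exact GX_bound_gen c₁ c₂ lam y t R ht hR p z hz 1 one_pos.le
    (by have := sq_cast_ge p.1 p.2; linarith) (2 * p.1) le_rfl

lemma abs_GX1_le (c₁ c₂ lam y t R : ℝ) (ht : 0 < t) (hR : 1 ≤ R) (p : ℕ × ℕ) (z : ℝ)
    (hz : |z| ≤ R) : |GX1 c₁ c₂ lam y t p z| ≤ ubX c₁ c₂ lam y t R p := by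
  have he : |GX1 c₁ c₂ lam y t p z|
      = |cX c₁ c₂ lam y t p| * ((2 * p.1 : ℕ) : ℝ) * |z| ^ (2 * p.1 - 1) := by
    unfold GX1; rw [abs_mul, abs_mul, abs_pow, Nat.abs_cast]
  rw [he]
  apply GX_bound_gen c₁ c₂ lam y t R ht hR p z hz _ (by positivity) _ _ (Nat.sub_le _ _)
  have h1 : (0:ℝ) ≤ (p.1:ℝ) := Nat.cast_nonneg _
  have h2 : (0:ℝ) ≤ (p.2:ℝ) := Nat.cast_nonneg _
  push_cast
  nlinarith

lemma abs_GX2_le (c₁ c₂ lam y t R : ℝ) (ht : 0 < t) (hR : 1 ≤ R) (p : ℕ × ℕ) (z : ℝ)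
    (hz : |z| ≤ R) : |GX2 c₁ c₂ lam y t p z| ≤ ubX c₁ c₂ lam y t R p := by
  have he : |GX2 c₁ c₂ lam y t p z|
      = |cX c₁ c₂ lam y t p| * (((2 * p.1 : ℕ) : ℝ) * ((2 * p.1 - 1 : ℕ) : ℝ))
        * |z| ^ (2 * p.1 - 1 - 1) := by
    unfold GX2; rw [abs_mul, abs_mul, abs_mul, abs_pow, Nat.abs_cast, Nat.abs_cast]; ring
  rw [he]
  apply GX_bound_gen c₁ c₂ lam y t R ht hR p z hz _ (by positivity) _ _
    ((Nat.sub_le _ _).trans (Nat.sub_le _ _))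
  have h1 : (0:ℝ) ≤ (p.1:ℝ) := Nat.cast_nonneg _
  have h2 : (0:ℝ) ≤ (p.2:ℝ) := Nat.cast_nonneg _
  have h3 : ((2 * p.1 - 1 : ℕ) : ℝ) ≤ 2 * (p.1:ℝ) := by
    have : (2 * p.1 - 1 : ℕ) ≤ 2 * p.1 := Nat.sub_le _ _
    calc ((2 * p.1 - 1 : ℕ) : ℝ) ≤ ((2 * p.1 : ℕ) : ℝ) := Nat.cast_le.2 this
      _ = 2 * (p.1:ℝ) := by push_cast; ring
  have h4 : (0:ℝ) ≤ ((2 * p.1 - 1 : ℕ) : ℝ) := Nat.cast_nonneg _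
  push_cast
  nlinarith

lemma xMain (α β lam y t : ℝ)
    (hc₁ : ∀ n : ℕ, (1 + 2 * α) / 2 ≠ -(n : ℝ)) (hc₂ : ∀ n : ℕ, (1 + 2 * β) / 2 ≠ -(n : ℝ))
    (ht : 0 < t) (x : ℝ) (hx : 0 < x) :
    deriv (fun s => uPsi1 α β lam s y t) x
        = ∑' p, GX1 ((1 + 2 * α) / 2) ((1 + 2 * β) / 2) lam y t p x
    ∧ iteratedDeriv 2 (fun s => uPsi1 α β lam s y t) x
        = ∑' p, GX2 ((1 + 2 * α) / 2) ((1 + 2 * β) / 2) lam y t p x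
    ∧ Summable (fun p => GX1 ((1 + 2 * α) / 2) ((1 + 2 * β) / 2) lam y t p x)
    ∧ Summable (fun p => GX2 ((1 + 2 * α) / 2) ((1 + 2 * β) / 2) lam y t p x) := by
  set c₁ := (1 + 2 * α) / 2
  set c₂ := (1 + 2 * β) / 2
  set R := x + 1 with hRdef
  have hR : 1 ≤ R := by simp [hRdef]; linarith
  set s : Set ℝ := Set.Ioo (-R) R with hsdef
  have hmem : x ∈ s := by constructor <;> simp [hRdef] <;> linarith
  have hzabs : ∀ z ∈ s, |z| ≤ R := fun z hz => (abs_lt.2 ⟨hz.1, hz.2⟩).le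
  have hopen : IsOpen s := isOpen_Ioo
  have hu := summable_ubX hc₁ hc₂ lam y t R
  have hfun : (fun s0 => uPsi1 α β lam s0 y t) = fun z => ∑' p, GX0 c₁ c₂ lam y t p z :=
    funext fun z => uPsi1_eq_tsum_GX0 α β lam y t z
  have hD1 : ∀ z ∈ s, HasDerivAt (fun z' => ∑' p, GX0 c₁ c₂ lam y t p z')
      (∑' p, GX1 c₁ c₂ lam y t p z) z := fun z hz =>
    hasDerivAt_tsum_on _ _ (ubX c₁ c₂ lam y t R) s hopen hu
      (fun i z' hz' => hasDerivAt_GX0 c₁ c₂ lam y t i z')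
      (fun i z' hz' => abs_GX0_le c₁ c₂ lam y t R ht hR i z' (hzabs z' hz'))
      (fun i z' hz' => abs_GX1_le c₁ c₂ lam y t R ht hR i z' (hzabs z' hz')) hz
  have hD2 : ∀ z ∈ s, HasDerivAt (fun z' => ∑' p, GX1 c₁ c₂ lam y t p z')
      (∑' p, GX2 c₁ c₂ lam y t p z) z := fun z hz =>
    hasDerivAt_tsum_on _ _ (ubX c₁ c₂ lam y t R) s hopen hu
      (fun i z' hz' => hasDerivAt_GX1 c₁ c₂ lam y t i z')
      (fun i z' hz' => abs_GX1_le c₁ c₂ lam y t R ht hR i z' (hzabs z' hz'))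
      (fun i z' hz' => abs_GX2_le c₁ c₂ lam y t R ht hR i z' (hzabs z' hz')) hz
  refine ⟨?_, ?_, ?_, ?_⟩
  · rw [hfun]; exact (hD1 x hmem).deriv
  · rw [show (2:ℕ) = 1 + 1 from rfl, iteratedDeriv_succ, iteratedDeriv_one, hfun]
    have hev : deriv (fun z => ∑' p, GX0 c₁ c₂ lam y t p z)
        =ᶠ[nhds x] fun z => ∑' p, GX1 c₁ c₂ lam y t p z :=
      Filter.eventually_of_mem (hopen.mem_nhds hmem) (fun z hz => (hD1 z hz).deriv)
    rw [hev.deriv_eq]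
    exact (hD2 x hmem).deriv
  · exact Summable.of_abs (hu.of_nonneg_of_le (fun i => abs_nonneg _)
      (fun i => abs_GX1_le c₁ c₂ lam y t R ht hR i x (hzabs x hmem)))
  · exact Summable.of_abs (hu.of_nonneg_of_le (fun i => abs_nonneg _)
      (fun i => abs_GX2_le c₁ c₂ lam y t R ht hR i x (hzabs x hmem)))

noncomputable def AT (x y t : ℝ) : ℝ := max (x ^ 2 * (8 * (t/2))⁻¹) (y ^ 2 * (8 * (t/2))⁻¹)

noncomputable def MT (lam t : ℝ) : ℝ :=
  |lam| * ((t/2) ^ (-(1 / 2) : ℝ) + (t/2) ^ (-(1 / 2) - 1 : ℝ))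

noncomputable def ubT (α β lam x y t : ℝ) (p : ℕ × ℕ) : ℝ :=
  4 * MT lam t *
    (Kb ((1 + 2 * α) / 2) ((1 + 2 * β) / 2) p * (AT x y t ^ p.1 * AT x y t ^ p.2)
      * ((p.1 : ℝ) + p.2 + 2) ^ 2)

lemma AT_nonneg (x y t : ℝ) (ht : 0 < t) : 0 ≤ AT x y t :=
  le_trans (by positivity) (le_max_left _ _)

lemma summable_ubT {α β : ℝ}
    (hc₁ : ∀ n : ℕ, (1 + 2 * α) / 2 ≠ -(n : ℝ)) (hc₂ : ∀ n : ℕ, (1 + 2 * β) / 2 ≠ -(n : ℝ))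
    (lam x y t : ℝ) (ht : 0 < t) : Summable (ubT α β lam x y t) :=
  (summable_master hc₁ hc₂ (AT_nonneg x y t ht)).mul_left _

lemma rpow_decomp (τ : ℝ) (hτ : 0 < τ) (r : ℝ) (m n : ℕ) :
    τ ^ (r + (-(m : ℝ)) + (-(n : ℝ))) = τ ^ r * (τ⁻¹) ^ m * (τ⁻¹) ^ n := by
  have h1 : τ ^ (-(m : ℝ)) = (τ⁻¹) ^ m := by
    rw [Real.rpow_neg hτ.le, Real.rpow_natCast, inv_pow]
  have h2 : τ ^ (-(n : ℝ)) = (τ⁻¹) ^ n := by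
    rw [Real.rpow_neg hτ.le, Real.rpow_natCast, inv_pow]
  rw [Real.rpow_add hτ, Real.rpow_add hτ, h1, h2]

lemma abs_FT_core (α β lam x y : ℝ) (p : ℕ × ℕ) (w : ℝ) :
    |lam * Kc ((1 + 2 * α) / 2) ((1 + 2 * β) / 2) p * (-(x ^ 2) / 8) ^ p.1 *
      (-(y ^ 2) / 8) ^ p.2 * w|
    = |lam| * Kb ((1 + 2 * α) / 2) ((1 + 2 * β) / 2) p * (x ^ 2 / 8) ^ p.1 *
      (y ^ 2 / 8) ^ p.2 * |w| := by
  rw [abs_mul, abs_mul, abs_mul, abs_mul, abs_Kc, abs_pow, abs_pow]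
  congr 3
  · rw [abs_div, abs_neg, abs_of_nonneg (by positivity : (0:ℝ) ≤ x ^ 2)]; norm_num
  · rw [abs_div, abs_neg, abs_of_nonneg (by positivity : (0:ℝ) ≤ y ^ 2)]; norm_num

lemma abs_FT_le_aux (α β lam x y t : ℝ) (ht : 0 < t) (p : ℕ × ℕ) (z : ℝ)
    (hz : t/2 < z) (r : ℝ) (hr : r ≤ 0) (hrM : |lam| * (t/2) ^ r ≤ MT lam t)
    (j : ℝ) (hj0 : 0 ≤ j) (hj : j ≤ 4 * ((p.1 : ℝ) + p.2 + 2) ^ 2) :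
    |lam| * Kb ((1 + 2 * α) / 2) ((1 + 2 * β) / 2) p * (x ^ 2 / 8) ^ p.1 *
      (y ^ 2 / 8) ^ p.2 * (j * z ^ (r + (-(p.1 : ℝ)) + (-(p.2 : ℝ))))
    ≤ ubT α β lam x y t p := by
  obtain ⟨m, n⟩ := p
  have hτ : (0:ℝ) < t/2 := by linarith
  have hz0 : (0:ℝ) < z := lt_trans hτ hz
  set c₁ := (1 + 2 * α) / 2
  set c₂ := (1 + 2 * β) / 2
  have hE : r + (-(m : ℝ)) + (-(n : ℝ)) ≤ 0 := by
    have h1 : (0:ℝ) ≤ (m:ℝ) := Nat.cast_nonneg m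
    have h2 : (0:ℝ) ≤ (n:ℝ) := Nat.cast_nonneg n
    linarith
  have hmono : z ^ (r + (-(m : ℝ)) + (-(n : ℝ))) ≤ (t/2) ^ (r + (-(m : ℝ)) + (-(n : ℝ))) :=
    Real.rpow_le_rpow_of_nonpos hτ hz.le hE
  have hKb := Kb_nonneg c₁ c₂ (m, n)
  have pre0 : (0:ℝ) ≤ |lam| * Kb c₁ c₂ (m, n) * (x ^ 2 / 8) ^ m * (y ^ 2 / 8) ^ n :=
    mul_nonneg (mul_nonneg (mul_nonneg (abs_nonneg _) hKb) (by positivity)) (by positivity)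
  have step1 : |lam| * Kb c₁ c₂ (m, n) * (x ^ 2 / 8) ^ m * (y ^ 2 / 8) ^ n *
        (j * z ^ (r + (-(m : ℝ)) + (-(n : ℝ))))
      ≤ |lam| * Kb c₁ c₂ (m, n) * (x ^ 2 / 8) ^ m * (y ^ 2 / 8) ^ n *
        (j * (t/2) ^ (r + (-(m : ℝ)) + (-(n : ℝ)))) := by
    apply mul_le_mul_of_nonneg_left (mul_le_mul_of_nonneg_left hmono hj0) pre0
  have step2 : |lam| * Kb c₁ c₂ (m, n) * (x ^ 2 / 8) ^ m * (y ^ 2 / 8) ^ n *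
        (j * (t/2) ^ (r + (-(m : ℝ)) + (-(n : ℝ))))
      = (|lam| * (t/2) ^ r) * Kb c₁ c₂ (m, n) * (x ^ 2 * (8 * (t/2))⁻¹) ^ m *
        (y ^ 2 * (8 * (t/2))⁻¹) ^ n * j := by
    rw [rpow_decomp (t/2) hτ r m n]
    set τ := t/2 with hτdef
    clear_value τ
    ring
  have step3 : (|lam| * (t/2) ^ r) * Kb c₁ c₂ (m, n) * (x ^ 2 * (8 * (t/2))⁻¹) ^ m *
        (y ^ 2 * (8 * (t/2))⁻¹) ^ n * j
      ≤ 4 * MT lam t * (Kb c₁ c₂ (m, n) * (AT x y t ^ m * AT x y t ^ n)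
          * ((m : ℝ) + n + 2) ^ 2) := by
    apply prod_bound hKb (by positivity) (by positivity) hj0 (by positivity) hrM
      (pow_le_pow_left₀ (by positivity) (le_max_left _ _) m)
      (pow_le_pow_left₀ (by positivity) (le_max_right _ _) n) hj
  exact (step1.trans_eq step2).trans step3

lemma abs_FT0_le (α β lam x y t : ℝ) (ht : 0 < t) (p : ℕ × ℕ) (z : ℝ) (hz : t/2 < z) :
    |FT0 α β lam x y p z| ≤ ubT α β lam x y t p := by
  have hτ : (0:ℝ) < t/2 := by linarith
  have hz0 : (0:ℝ) < z := lt_trans hτ hz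
  unfold FT0
  rw [abs_FT_core]
  have h1 : |z ^ (-(1 / 2) - (p.1 : ℝ) - (p.2 : ℝ))|
      = 1 * z ^ ((-(1/2) : ℝ) + (-(p.1 : ℝ)) + (-(p.2 : ℝ))) := by
    rw [abs_of_nonneg (Real.rpow_nonneg hz0.le _), one_mul]
    congr 1
  rw [h1]
  apply abs_FT_le_aux α β lam x y t ht p z hz (-(1/2)) (by norm_num) ?_ 1 one_pos.le
    (by have := sq_cast_ge p.1 p.2; linarith)
  · unfold MT
    have : (0:ℝ) ≤ |lam| := abs_nonneg _
    have h2 : (0:ℝ) ≤ (t/2) ^ (-(1 / 2) - 1 : ℝ) := Real.rpow_nonneg hτ.le _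
    nlinarith [Real.rpow_nonneg hτ.le (-(1/2) : ℝ)]

lemma abs_FT1_le (α β lam x y t : ℝ) (ht : 0 < t) (p : ℕ × ℕ) (z : ℝ) (hz : t/2 < z) :
    |FT1 α β lam x y p z| ≤ ubT α β lam x y t p := by
  have hτ : (0:ℝ) < t/2 := by linarith
  have hz0 : (0:ℝ) < z := lt_trans hτ hz
  unfold FT1
  rw [abs_FT_core]
  have h1 : |(-(1 / 2) - (p.1 : ℝ) - (p.2 : ℝ)) * z ^ (-(1 / 2) - (p.1 : ℝ) - (p.2 : ℝ) - 1)|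
      = (1/2 + (p.1 : ℝ) + p.2) * z ^ ((-(1/2) - 1 : ℝ) + (-(p.1 : ℝ)) + (-(p.2 : ℝ))) := by
    rw [abs_mul, abs_of_nonneg (Real.rpow_nonneg hz0.le _)]
    have h2 : |(-(1 / 2) - (p.1 : ℝ) - (p.2 : ℝ))| = 1/2 + (p.1 : ℝ) + p.2 := by
      rw [abs_of_nonpos (by
        have h3 : (0:ℝ) ≤ (p.1:ℝ) := Nat.cast_nonneg _
        have h4 : (0:ℝ) ≤ (p.2:ℝ) := Nat.cast_nonneg _
        linarith)]
      ring
    rw [h2]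
    congr 2; ring
  rw [h1]
  apply abs_FT_le_aux α β lam x y t ht p z hz (-(1/2) - 1) (by norm_num) ?_ _ ?_ ?_
  · unfold MT
    have h2 : (0:ℝ) ≤ (t/2) ^ (-(1 / 2) : ℝ) := Real.rpow_nonneg hτ.le _
    nlinarith [Real.rpow_nonneg hτ.le (-(1/2) - 1 : ℝ), abs_nonneg lam]
  · have h3 : (0:ℝ) ≤ (p.1:ℝ) := Nat.cast_nonneg _
    have h4 : (0:ℝ) ≤ (p.2:ℝ) := Nat.cast_nonneg _
    linarith
  · have h3 : (0:ℝ) ≤ (p.1:ℝ) := Nat.cast_nonneg _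
    have h4 : (0:ℝ) ≤ (p.2:ℝ) := Nat.cast_nonneg _
    nlinarith

lemma tMain (α β lam x y : ℝ)
    (hc₁ : ∀ n : ℕ, (1 + 2 * α) / 2 ≠ -(n : ℝ)) (hc₂ : ∀ n : ℕ, (1 + 2 * β) / 2 ≠ -(n : ℝ))
    (t : ℝ) (ht : 0 < t) :
    deriv (fun s => uPsi1 α β lam x y s) t = ∑' p, FT1 α β lam x y p t
    ∧ Summable (fun p => FT1 α β lam x y p t) := by
  set s : Set ℝ := Set.Ioi (t/2) with hsdef
  have hopen : IsOpen s := isOpen_Ioi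
  have hmem : t ∈ s := by simp [hsdef]; linarith
  have hu := summable_ubT hc₁ hc₂ lam x y t ht
  have hD : ∀ z ∈ s, HasDerivAt (fun z' => ∑' p, FT0 α β lam x y p z')
      (∑' p, FT1 α β lam x y p z) z := fun z hz =>
    hasDerivAt_tsum_on _ _ (ubT α β lam x y t) s hopen hu
      (fun i z' hz' => hasDerivAt_FT0 α β lam x y i z' (lt_trans (by linarith) hz'))
      (fun i z' hz' => abs_FT0_le α β lam x y t ht i z' hz')
      (fun i z' hz' => abs_FT1_le α β lam x y t ht i z' hz') hz
  have hEq : (fun z => uPsi1 α β lam x y z) =ᶠ[nhds t] fun z => ∑' p, FT0 α β lam x y p z :=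
    Filter.eventually_of_mem (hopen.mem_nhds hmem)
      (fun z hz => uPsi1_eq_tsum_FT0 α β lam x y z (lt_trans (by linarith) hz))
  constructor
  · exact (HasDerivAt.congr_of_eventuallyEq (hD t hmem) hEq).deriv
  · exact Summable.of_abs (hu.of_nonneg_of_le (fun i => abs_nonneg _)
      (fun i => abs_FT1_le α β lam x y t ht i t hmem))

set_option maxHeartbeats 1000000 in
lemma index_id (α β lam x y t : ℝ) (hx : 0 < x) (hy : 0 < y) (ht : 0 < t)
    (hc₁ : ∀ k : ℕ, (1 + 2 * α) / 2 ≠ -(k : ℝ)) (hc₂ : ∀ k : ℕ, (1 + 2 * β) / 2 ≠ -(k : ℝ))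
    (m n : ℕ) :
    FT1 α β lam x y (m, n) t
      = (GX2 ((1 + 2 * α) / 2) ((1 + 2 * β) / 2) lam y t (m + 1, n) x
          + (2 * α / x) * GX1 ((1 + 2 * α) / 2) ((1 + 2 * β) / 2) lam y t (m + 1, n) x)
      + (GX2 ((1 + 2 * β) / 2) ((1 + 2 * α) / 2) lam x t (n + 1, m) y
          + (2 * β / y) * GX1 ((1 + 2 * β) / 2) ((1 + 2 * α) / 2) lam x t (n + 1, m) y) := by
  have hP1 : poch ((1 + 2 * α) / 2) m ≠ 0 := poch_ne_zero hc₁ m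
  have hP2 : poch ((1 + 2 * β) / 2) n ≠ 0 := poch_ne_zero hc₂ n
  have hc1m : (1 + 2 * α) / 2 + (m : ℝ) ≠ 0 := fun h => hc₁ m (by linarith)
  have hc2n : (1 + 2 * β) / 2 + (n : ℝ) ≠ 0 := fun h => hc₂ n (by linarith)
  have hfm : (Nat.factorial m : ℝ) ≠ 0 := by exact_mod_cast (Nat.factorial_pos m).ne'
  have hfn : (Nat.factorial n : ℝ) ≠ 0 := by exact_mod_cast (Nat.factorial_pos n).ne'
  have hm1 : ((m : ℝ) + 1) ≠ 0 := by positivity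
  have hn1 : ((n : ℝ) + 1) ≠ 0 := by positivity
  have e1 : 2 * (m + 1) - 1 = 2 * m + 1 := by omega
  have e2 : 2 * (m + 1) - 1 - 1 = 2 * m := by omega
  have e1' : 2 * (n + 1) - 1 = 2 * n + 1 := by omega
  have e2' : 2 * (n + 1) - 1 - 1 = 2 * n := by omega
  have e3 : (m + 1) + n = (m + n) + 1 := by omega
  have e4 : (n + 1) + m = (m + n) + 1 := by omega
  have hrp : t ^ (-(1/2 : ℝ) - (m : ℝ) - n - 1)
      = t ^ (-(1/2) : ℝ) * (t⁻¹) ^ m * (t⁻¹) ^ n * t⁻¹ := by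
    rw [show -(1/2 : ℝ) - (m : ℝ) - n - 1 = (-(1/2) + -((m : ℝ)) + -((n : ℝ))) + (-1 : ℝ) by
      ring, Real.rpow_add ht, rpow_decomp t ht, Real.rpow_neg_one]
  have claimA : FT1 α β lam x y (m, n) t
      = lam * t ^ (-(1/2) : ℝ) * poch (1/2) (m+n) * (-(1/2) - (m:ℝ) - (n:ℝ))
        * ((-(x ^ 2) / (8 * t)) ^ m * (-(y ^ 2) / (8 * t)) ^ n)
        * (poch ((1 + 2 * α) / 2) m * poch ((1 + 2 * β) / 2) n *
            (Nat.factorial m : ℝ) * (Nat.factorial n : ℝ))⁻¹ * t⁻¹ := by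
    unfold FT1 Kc
    dsimp only
    rw [hrp]
    ring
  have claimB : GX2 ((1 + 2 * α) / 2) ((1 + 2 * β) / 2) lam y t (m + 1, n) x
      = lam * t ^ (-(1/2) : ℝ) * (poch (1/2) (m+n) * (1/2 + (m:ℝ) + n))
        * ((-(x ^ 2) / (8 * t)) ^ m * (-(y ^ 2) / (8 * t)) ^ n)
        * (poch ((1 + 2 * α) / 2) m * ((1 + 2 * α) / 2 + (m:ℝ)) * poch ((1 + 2 * β) / 2) n *
            ((Nat.factorial m : ℝ) * ((m:ℝ) + 1)) * (Nat.factorial n : ℝ))⁻¹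
        * (-(8 * t))⁻¹ * ((2 * (m:ℝ) + 2) * (2 * (m:ℝ) + 1)) := by
    unfold GX2 cX Kc
    dsimp only
    rw [e2, e1, e3, poch_succ (1/2) (m+n), poch_succ ((1 + 2 * α) / 2) m, Nat.factorial_succ m]
    push_cast
    ring
  have claimC : (2 * α / x) * GX1 ((1 + 2 * α) / 2) ((1 + 2 * β) / 2) lam y t (m + 1, n) x
      = lam * t ^ (-(1/2) : ℝ) * (poch (1/2) (m+n) * (1/2 + (m:ℝ) + n))
        * ((-(x ^ 2) / (8 * t)) ^ m * (-(y ^ 2) / (8 * t)) ^ n)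
        * (poch ((1 + 2 * α) / 2) m * ((1 + 2 * α) / 2 + (m:ℝ)) * poch ((1 + 2 * β) / 2) n *
            ((Nat.factorial m : ℝ) * ((m:ℝ) + 1)) * (Nat.factorial n : ℝ))⁻¹
        * (-(8 * t))⁻¹ * ((2 * (m:ℝ) + 2) * (2 * α) * (x * x⁻¹)) := by
    unfold GX1 cX Kc
    dsimp only
    rw [e1, e3, poch_succ (1/2) (m+n), poch_succ ((1 + 2 * α) / 2) m, Nat.factorial_succ m]
    push_cast
    ring
  have claimD : GX2 ((1 + 2 * β) / 2) ((1 + 2 * α) / 2) lam x t (n + 1, m) y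
      = lam * t ^ (-(1/2) : ℝ) * (poch (1/2) (m+n) * (1/2 + (m:ℝ) + n))
        * ((-(x ^ 2) / (8 * t)) ^ m * (-(y ^ 2) / (8 * t)) ^ n)
        * (poch ((1 + 2 * α) / 2) m * poch ((1 + 2 * β) / 2) n * ((1 + 2 * β) / 2 + (n:ℝ)) *
            (Nat.factorial m : ℝ) * ((Nat.factorial n : ℝ) * ((n:ℝ) + 1)))⁻¹
        * (-(8 * t))⁻¹ * ((2 * (n:ℝ) + 2) * (2 * (n:ℝ) + 1)) := by
    unfold GX2 cX Kc
    dsimp only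
    rw [e2', e1', e4, poch_succ (1/2) (m+n), poch_succ ((1 + 2 * β) / 2) n, Nat.factorial_succ n]
    push_cast
    ring
  have claimE : (2 * β / y) * GX1 ((1 + 2 * β) / 2) ((1 + 2 * α) / 2) lam x t (n + 1, m) y
      = lam * t ^ (-(1/2) : ℝ) * (poch (1/2) (m+n) * (1/2 + (m:ℝ) + n))
        * ((-(x ^ 2) / (8 * t)) ^ m * (-(y ^ 2) / (8 * t)) ^ n)
        * (poch ((1 + 2 * α) / 2) m * poch ((1 + 2 * β) / 2) n * ((1 + 2 * β) / 2 + (n:ℝ)) *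
            (Nat.factorial m : ℝ) * ((Nat.factorial n : ℝ) * ((n:ℝ) + 1)))⁻¹
        * (-(8 * t))⁻¹ * ((2 * (n:ℝ) + 2) * (2 * β) * (y * y⁻¹)) := by
    unfold GX1 cX Kc
    dsimp only
    rw [e1', e4, poch_succ (1/2) (m+n), poch_succ ((1 + 2 * β) / 2) n, Nat.factorial_succ n]
    push_cast
    ring
  rw [mul_inv_cancel₀ hx.ne'] at claimC
  rw [mul_inv_cancel₀ hy.ne'] at claimE
  rw [claimA, claimB, claimC, claimD, claimE]
  generalize (-(x ^ 2) / (8 * t)) ^ m = U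
  generalize (-(y ^ 2) / (8 * t)) ^ n = V
  have hDX : (poch ((1 + 2 * α) / 2) m * ((1 + 2 * α) / 2 + (m:ℝ)) * poch ((1 + 2 * β) / 2) n *
        ((Nat.factorial m : ℝ) * ((m:ℝ) + 1)) * (Nat.factorial n : ℝ))⁻¹
        * (((1 + 2 * α) / 2 + (m:ℝ)) * ((m:ℝ) + 1))
      = (poch ((1 + 2 * α) / 2) m * poch ((1 + 2 * β) / 2) n *
          (Nat.factorial m : ℝ) * (Nat.factorial n : ℝ))⁻¹ := by
    rw [show poch ((1 + 2 * α) / 2) m * ((1 + 2 * α) / 2 + (m:ℝ)) * poch ((1 + 2 * β) / 2) n *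
        ((Nat.factorial m : ℝ) * ((m:ℝ) + 1)) * (Nat.factorial n : ℝ)
      = (poch ((1 + 2 * α) / 2) m * poch ((1 + 2 * β) / 2) n *
          (Nat.factorial m : ℝ) * (Nat.factorial n : ℝ)) * (((1 + 2 * α) / 2 + (m:ℝ)) * ((m:ℝ) + 1))
      from by ring, mul_inv, mul_assoc,
      inv_mul_cancel₀ (mul_ne_zero hc1m hm1), mul_one]
  have hDY : (poch ((1 + 2 * α) / 2) m * poch ((1 + 2 * β) / 2) n * ((1 + 2 * β) / 2 + (n:ℝ)) *
        (Nat.factorial m : ℝ) * ((Nat.factorial n : ℝ) * ((n:ℝ) + 1)))⁻¹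
        * (((1 + 2 * β) / 2 + (n:ℝ)) * ((n:ℝ) + 1))
      = (poch ((1 + 2 * α) / 2) m * poch ((1 + 2 * β) / 2) n *
          (Nat.factorial m : ℝ) * (Nat.factorial n : ℝ))⁻¹ := by
    rw [show poch ((1 + 2 * α) / 2) m * poch ((1 + 2 * β) / 2) n * ((1 + 2 * β) / 2 + (n:ℝ)) *
        (Nat.factorial m : ℝ) * ((Nat.factorial n : ℝ) * ((n:ℝ) + 1))
      = (poch ((1 + 2 * α) / 2) m * poch ((1 + 2 * β) / 2) n *
          (Nat.factorial m : ℝ) * (Nat.factorial n : ℝ)) * (((1 + 2 * β) / 2 + (n:ℝ)) * ((n:ℝ) + 1))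
      from by ring, mul_inv, mul_assoc,
      inv_mul_cancel₀ (mul_ne_zero hc2n hn1), mul_one]
  have hx2 : lam * t ^ (-(1/2) : ℝ) * (poch (1/2) (m+n) * (1/2 + (m:ℝ) + n))
        * (U * V)
        * (poch ((1 + 2 * α) / 2) m * ((1 + 2 * α) / 2 + (m:ℝ)) * poch ((1 + 2 * β) / 2) n *
            ((Nat.factorial m : ℝ) * ((m:ℝ) + 1)) * (Nat.factorial n : ℝ))⁻¹
        * (-(8 * t))⁻¹ * ((2 * (m:ℝ) + 2) * (2 * (m:ℝ) + 1))
      + lam * t ^ (-(1/2) : ℝ) * (poch (1/2) (m+n) * (1/2 + (m:ℝ) + n))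
        * (U * V)
        * (poch ((1 + 2 * α) / 2) m * ((1 + 2 * α) / 2 + (m:ℝ)) * poch ((1 + 2 * β) / 2) n *
            ((Nat.factorial m : ℝ) * ((m:ℝ) + 1)) * (Nat.factorial n : ℝ))⁻¹
        * (-(8 * t))⁻¹ * ((2 * (m:ℝ) + 2) * (2 * α) * 1)
      = lam * t ^ (-(1/2) : ℝ) * (poch (1/2) (m+n) * (1/2 + (m:ℝ) + n)) * (U * V)
        * (poch ((1 + 2 * α) / 2) m * poch ((1 + 2 * β) / 2) n *
            (Nat.factorial m : ℝ) * (Nat.factorial n : ℝ))⁻¹ * (-(8 * t))⁻¹ * 4 := by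
    rw [← hDX]
    ring
  have hy2 : lam * t ^ (-(1/2) : ℝ) * (poch (1/2) (m+n) * (1/2 + (m:ℝ) + n))
        * (U * V)
        * (poch ((1 + 2 * α) / 2) m * poch ((1 + 2 * β) / 2) n * ((1 + 2 * β) / 2 + (n:ℝ)) *
            (Nat.factorial m : ℝ) * ((Nat.factorial n : ℝ) * ((n:ℝ) + 1)))⁻¹
        * (-(8 * t))⁻¹ * ((2 * (n:ℝ) + 2) * (2 * (n:ℝ) + 1))
      + lam * t ^ (-(1/2) : ℝ) * (poch (1/2) (m+n) * (1/2 + (m:ℝ) + n))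
        * (U * V)
        * (poch ((1 + 2 * α) / 2) m * poch ((1 + 2 * β) / 2) n * ((1 + 2 * β) / 2 + (n:ℝ)) *
            (Nat.factorial m : ℝ) * ((Nat.factorial n : ℝ) * ((n:ℝ) + 1)))⁻¹
        * (-(8 * t))⁻¹ * ((2 * (n:ℝ) + 2) * (2 * β) * 1)
      = lam * t ^ (-(1/2) : ℝ) * (poch (1/2) (m+n) * (1/2 + (m:ℝ) + n)) * (U * V)
        * (poch ((1 + 2 * α) / 2) m * poch ((1 + 2 * β) / 2) n *
            (Nat.factorial m : ℝ) * (Nat.factorial n : ℝ))⁻¹ * (-(8 * t))⁻¹ * 4 := by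
    rw [← hDY]
    ring
  rw [hx2, hy2]
  ring


theorem uPsi1_solves (α β lam : ℝ)
    (hc₁ : ∀ n : ℕ, (1 + 2 * α) / 2 ≠ -(n : ℝ))
    (hc₂ : ∀ n : ℕ, (1 + 2 * β) / 2 ≠ -(n : ℝ)) :
    ∀ x y t : ℝ, 0 < x → 0 < y → 0 < t →
      deriv (fun s => uPsi1 α β lam x y s) t
        - iteratedDeriv 2 (fun s => uPsi1 α β lam s y t) x
        - iteratedDeriv 2 (fun s => uPsi1 α β lam x s t) y
        - (2 * α / x) * deriv (fun s => uPsi1 α β lam s y t) x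
        - (2 * β / y) * deriv (fun s => uPsi1 α β lam x s t) y = 0 := by
  intro x y t hx hy ht
  obtain ⟨hdx1, hdx2, hsx1, hsx2⟩ := xMain α β lam y t hc₁ hc₂ ht x hx
  have hyfun : (fun s => uPsi1 α β lam x s t) = (fun s => uPsi1 β α lam s x t) :=
    funext fun s => uPsi1_swap α β lam x s t
  obtain ⟨hdy1, hdy2, hsy1, hsy2⟩ := xMain β α lam x t hc₂ hc₁ ht y hy
  obtain ⟨hdt, hst⟩ := tMain α β lam x y hc₁ hc₂ t ht
  rw [hdt, hyfun, hdx1, hdx2, hdy1, hdy2]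
  -- combined x- and y- direction term families
  have hGx : HasSum (fun p : ℕ × ℕ =>
      GX2 ((1 + 2 * α) / 2) ((1 + 2 * β) / 2) lam y t p x
        + (2 * α / x) * GX1 ((1 + 2 * α) / 2) ((1 + 2 * β) / 2) lam y t p x)
      ((∑' p, GX2 ((1 + 2 * α) / 2) ((1 + 2 * β) / 2) lam y t p x)
        + (2 * α / x) * ∑' p, GX1 ((1 + 2 * α) / 2) ((1 + 2 * β) / 2) lam y t p x) :=
    hsx2.hasSum.add (hsx1.hasSum.mul_left _)
  have hGy : HasSum (fun p : ℕ × ℕ =>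
      GX2 ((1 + 2 * β) / 2) ((1 + 2 * α) / 2) lam x t p y
        + (2 * β / y) * GX1 ((1 + 2 * β) / 2) ((1 + 2 * α) / 2) lam x t p y)
      ((∑' p, GX2 ((1 + 2 * β) / 2) ((1 + 2 * α) / 2) lam x t p y)
        + (2 * β / y) * ∑' p, GX1 ((1 + 2 * β) / 2) ((1 + 2 * α) / 2) lam x t p y) :=
    hsy2.hasSum.add (hsy1.hasSum.mul_left _)
  have hinj : Function.Injective (fun p : ℕ × ℕ => (p.1 + 1, p.2)) := by
    rintro ⟨a1, a2⟩ ⟨b1, b2⟩ h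
    simp only [Prod.mk.injEq] at h
    exact Prod.ext (by omega) h.2
  have hshiftx : HasSum (fun p : ℕ × ℕ =>
      GX2 ((1 + 2 * α) / 2) ((1 + 2 * β) / 2) lam y t (p.1 + 1, p.2) x
        + (2 * α / x) * GX1 ((1 + 2 * α) / 2) ((1 + 2 * β) / 2) lam y t (p.1 + 1, p.2) x)
      ((∑' p, GX2 ((1 + 2 * α) / 2) ((1 + 2 * β) / 2) lam y t p x)
        + (2 * α / x) * ∑' p, GX1 ((1 + 2 * α) / 2) ((1 + 2 * β) / 2) lam y t p x) := by
    apply (Function.Injective.hasSum_iff hinj ?_).2 hGx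
    rintro ⟨a, b⟩ hq
    cases a with
    | zero => simp [GX1, GX2]
    | succ a => exact absurd ⟨(a, b), rfl⟩ hq
  have hshifty : HasSum (fun p : ℕ × ℕ =>
      GX2 ((1 + 2 * β) / 2) ((1 + 2 * α) / 2) lam x t (p.1 + 1, p.2) y
        + (2 * β / y) * GX1 ((1 + 2 * β) / 2) ((1 + 2 * α) / 2) lam x t (p.1 + 1, p.2) y)
      ((∑' p, GX2 ((1 + 2 * β) / 2) ((1 + 2 * α) / 2) lam x t p y)
        + (2 * β / y) * ∑' p, GX1 ((1 + 2 * β) / 2) ((1 + 2 * α) / 2) lam x t p y) := by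
    apply (Function.Injective.hasSum_iff hinj ?_).2 hGy
    rintro ⟨a, b⟩ hq
    cases a with
    | zero => simp [GX1, GX2]
    | succ a => exact absurd ⟨(a, b), rfl⟩ hq
  have hyswap : HasSum (fun p : ℕ × ℕ =>
      GX2 ((1 + 2 * β) / 2) ((1 + 2 * α) / 2) lam x t (p.2 + 1, p.1) y
        + (2 * β / y) * GX1 ((1 + 2 * β) / 2) ((1 + 2 * α) / 2) lam x t (p.2 + 1, p.1) y)
      ((∑' p, GX2 ((1 + 2 * β) / 2) ((1 + 2 * α) / 2) lam x t p y)
        + (2 * β / y) * ∑' p, GX1 ((1 + 2 * β) / 2) ((1 + 2 * α) / 2) lam x t p y) :=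
    ((Equiv.prodComm ℕ ℕ).hasSum_iff).2 hshifty
  have htot := hshiftx.add hyswap
  have heq : (fun p : ℕ × ℕ =>
      (GX2 ((1 + 2 * α) / 2) ((1 + 2 * β) / 2) lam y t (p.1 + 1, p.2) x
        + (2 * α / x) * GX1 ((1 + 2 * α) / 2) ((1 + 2 * β) / 2) lam y t (p.1 + 1, p.2) x)
      + (GX2 ((1 + 2 * β) / 2) ((1 + 2 * α) / 2) lam x t (p.2 + 1, p.1) y
        + (2 * β / y) * GX1 ((1 + 2 * β) / 2) ((1 + 2 * α) / 2) lam x t (p.2 + 1, p.1) y))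
      = fun p : ℕ × ℕ => FT1 α β lam x y p t :=
    funext fun p => (index_id α β lam x y t hx hy ht hc₁ hc₂ p.1 p.2).symm
  rw [heq] at htot
  have hT := htot.tsum_eq
  linarith [hT]
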